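/- Let n ≥ 1 and let D ⊂ ℤ^n be a finite set. For λ ∈ D let p_λ = (v^{λ_1},…,v^{λ_n}) ∈ ℚ(v)^n. Let L = ℚ(v)[K_1^{±1},…,K_n^{±1}] be the Laurent polynomial ring and let φ : L → ∏_{λ∈D} ℚ(v) be the ℚ(v)-algebra homomorphism whose λ-th component is evaluation at p_λ. Then the kernel of φ equals the ideal of L generated by the elements F_h = ∏_{λ∈D} (K_h − v^{⟨h,λ⟩}) as h ranges over ℤ^n, where K_h = K_1^{h_1}⋯K_n^{h_n}. -/

import Mathlib

open Polynomial AddMonoidAlgebra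

noncomputable section

namespace Stmt3Aux


lemma vpow_nat_eq_one {m : ℕ} (h : (RatFunc.X : RatFunc ℚ) ^ m = 1) : m = 0 := by
  have h2 : (algebraMap (Polynomial ℚ) (RatFunc ℚ)) (Polynomial.X ^ m) =
      (algebraMap (Polynomial ℚ) (RatFunc ℚ)) 1 := by
    rw [map_pow, map_one, RatFunc.algebraMap_X, h]
  have h3 : (Polynomial.X : Polynomial ℚ) ^ m = 1 := RatFunc.algebraMap_injective ℚ h2
  have := congrArg Polynomial.natDegree h3
  simpa using this

lemma vpow_inj {a b : ℤ} (h : (RatFunc.X : RatFunc ℚ) ^ a = (RatFunc.X : RatFunc ℚ) ^ b) :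
    a = b := by
  have hX : (RatFunc.X : RatFunc ℚ) ≠ 0 := RatFunc.X_ne_zero
  have hd : (RatFunc.X : RatFunc ℚ) ^ (a - b) = 1 := by
    rw [zpow_sub₀ hX, h, div_self (zpow_ne_zero _ hX)]
  have : a - b = 0 := by
    rcases Int.eq_nat_or_neg (a - b) with ⟨m, hm | hm⟩
    · rw [hm, zpow_natCast] at hd
      rw [hm, vpow_nat_eq_one hd]; rfl
    · rw [hm, zpow_neg, zpow_natCast, inv_eq_one] at hd
      rw [hm, vpow_nat_eq_one hd]; rfl
  linarith

lemma prod_zpow₀ {M ι : Type*} [CommGroupWithZero M] (a : M) (ha : a ≠ 0) (s : Finset ι)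
    (e : ι → ℤ) : ∏ i ∈ s, a ^ e i = a ^ (∑ i ∈ s, e i) := by
  classical
  induction s using Finset.cons_induction with
  | empty => simp
  | cons i s hi ih => rw [Finset.prod_cons, Finset.sum_cons, zpow_add₀ ha, ih]

lemma exists_sep {n : ℕ} (S : Finset (Fin n → ℤ)) (hS : ∀ d ∈ S, d ≠ 0) :
    ∃ h : Fin n → ℤ, ∀ d ∈ S, (∑ a, h a * d a) ≠ 0 := by
  classical
  induction S using Finset.induction_on with
  | empty => exact ⟨0, by simp⟩
  | @insert d S' hd hS'ih =>
    obtain ⟨h, hh⟩ := hS'ih (fun d' hd' => hS d' (Finset.mem_insert_of_mem hd'))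
    set t : ℤ := ((insert d S').sup fun d' => (∑ a, h a * d' a).natAbs : ℕ) + 1 with ht
    refine ⟨fun a => h a + t * d a, ?_⟩
    intro d' hd'
    have expand : (∑ a, (h a + t * d a) * d' a)
        = (∑ a, h a * d' a) + t * (∑ a, d a * d' a) := by
      rw [Finset.mul_sum, ← Finset.sum_add_distrib]
      congr 1; ext a; ring
    rw [expand]
    set p := ∑ a, h a * d' a with hp
    set q := ∑ a, d a * d' a with hq
    have hpt : |p| < t := by
      have h1 : p.natAbs ≤ (insert d S').sup fun d'' => (∑ a, h a * d'' a).natAbs :=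
        Finset.le_sup (f := fun d'' => (∑ a, h a * d'' a).natAbs) hd'
      rw [ht, Int.abs_eq_natAbs]
      exact lt_of_le_of_lt (Nat.cast_le.mpr h1) (lt_add_one _)
    by_cases hq0 : q = 0
    · rw [hq0, mul_zero, add_zero]
      have hdd' : d' ≠ d := by
        rintro rfl
        have hd'0 : d' = 0 := by
          funext a
          have hterms : ∀ a ∈ Finset.univ, (0:ℤ) ≤ d' a * d' a :=
            fun a _ => mul_self_nonneg _
          have := (Finset.sum_eq_zero_iff_of_nonneg hterms).mp hq0 a (Finset.mem_univ a)
          exact mul_self_eq_zero.mp this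
        exact hS d' hd' hd'0
      have : d' ∈ S' := by
        rcases Finset.mem_insert.mp hd' with h1 | h1
        · exact absurd h1 hdd'
        · exact h1
      exact hh d' this
    · intro habs
      have h1 : |p| = |t * q| := by
        have : p = -(t * q) := by linarith
        rw [this, abs_neg]
      have h2 : t ≤ |t * q| := by
        rw [abs_mul]
        have ht1 : (1:ℤ) ≤ |q| := Int.one_le_abs hq0
        have htpos : 0 < t := by positivity
        calc t = t * 1 := (mul_one t).symm
        _ ≤ |t| * |q| := by
          rw [abs_of_pos htpos]
          exact mul_le_mul_of_nonneg_left ht1 (le_of_lt htpos)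
      have := h2; rw [← h1] at this; linarith



variable {n : ℕ}

abbrev L (n : ℕ) := AddMonoidAlgebra (RatFunc ℚ) (Fin n → ℤ)

def dot (h lam : Fin n → ℤ) : ℤ := ∑ a, h a * lam a

lemma dot_add_left (h h' lam : Fin n → ℤ) : dot (h + h') lam = dot h lam + dot h' lam := by
  simp only [dot, Pi.add_apply, add_mul, Finset.sum_add_distrib]

def chi (lam : Fin n → ℤ) : Multiplicative (Fin n → ℤ) →* RatFunc ℚ where
  toFun h := (RatFunc.X : RatFunc ℚ) ^ dot (Multiplicative.toAdd h) lam
  map_one' := by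
    show (RatFunc.X : RatFunc ℚ) ^ dot (0 : Fin n → ℤ) lam = 1
    simp [dot]
  map_mul' x y := by
    show (RatFunc.X : RatFunc ℚ) ^ dot (Multiplicative.toAdd x + Multiplicative.toAdd y) lam = _
    rw [dot_add_left, zpow_add₀ RatFunc.X_ne_zero]

def phi (lam : Fin n → ℤ) : L n →ₐ[RatFunc ℚ] RatFunc ℚ :=
  AddMonoidAlgebra.lift _ _ _ (chi lam)

lemma phi_single (lam h : Fin n → ℤ) (c : RatFunc ℚ) :
    phi lam (single h c) = c * RatFunc.X ^ dot h lam := by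
  rw [phi, AddMonoidAlgebra.lift_single]
  rfl

lemma algebraMap_eq_single (c : RatFunc ℚ) :
    algebraMap (RatFunc ℚ) (L n) c = single 0 c := rfl

def Fg (D : Finset (Fin n → ℤ)) (h : Fin n → ℤ) : L n :=
  ∏ lam ∈ D, (single h (1 : RatFunc ℚ) -
    single 0 ((RatFunc.X : RatFunc ℚ) ^ (∑ a, h a * lam a : ℤ)))

def Idl (D : Finset (Fin n → ℤ)) : Ideal (L n) := Ideal.span (Set.range (Fg D))

lemma Fg_eq (D : Finset (Fin n → ℤ)) (h : Fin n → ℤ) :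
    Fg D h = ∏ lam ∈ D, (single h (1 : RatFunc ℚ) -
      single 0 ((RatFunc.X : RatFunc ℚ) ^ dot h lam)) := rfl

lemma Fg_mem (D : Finset (Fin n → ℤ)) (h : Fin n → ℤ) : Fg D h ∈ Idl D :=
  Ideal.subset_span ⟨h, rfl⟩

def alf (hstar lam : Fin n → ℤ) : RatFunc ℚ := (RatFunc.X : RatFunc ℚ) ^ dot hstar lam

def eL (D : Finset (Fin n → ℤ)) (hstar : Fin n → ℤ) (i : Fin n → ℤ) : L n :=
  Polynomial.aeval (single hstar (1 : RatFunc ℚ)) (Lagrange.basis D (alf hstar) i)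

-- Lagrange facts (general field)
lemma X_sub_mul_basis {F ι : Type*} [Field F] [DecidableEq ι] (s : Finset ι) (v : ι → F)
    (i : ι) (hi : i ∈ s) :
    (X - C (v i)) * Lagrange.basis s v i =
      C (∏ j ∈ s.erase i, (v i - v j)⁻¹) * ∏ j ∈ s, (X - C (v j)) := by
  unfold Lagrange.basis Lagrange.basisDivisor
  rw [Finset.prod_mul_distrib, ← map_prod]
  rw [← Finset.mul_prod_erase s _ hi]
  ring

lemma basis_mul_basis {F ι : Type*} [Field F] [DecidableEq ι] (s : Finset ι) (v : ι → F)
    (i j : ι) (hi : i ∈ s) (hj : j ∈ s) (hij : i ≠ j) :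
    ∃ q : F[X], Lagrange.basis s v i * Lagrange.basis s v j = q * ∏ l ∈ s, (X - C (v l)) := by
  have hjei : j ∈ s.erase i := Finset.mem_erase.mpr ⟨hij.symm, hj⟩
  have h1 : Lagrange.basis s v i = Lagrange.basisDivisor (v i) (v j) *
      ∏ l ∈ (s.erase i).erase j, Lagrange.basisDivisor (v i) (v l) :=
    (Finset.mul_prod_erase _ _ hjei).symm
  refine ⟨C (v i - v j)⁻¹ * (∏ l ∈ (s.erase i).erase j, Lagrange.basisDivisor (v i) (v l)) *
    C (∏ l ∈ s.erase j, (v j - v l)⁻¹), ?_⟩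
  calc Lagrange.basis s v i * Lagrange.basis s v j
      = C (v i - v j)⁻¹ * (∏ l ∈ (s.erase i).erase j, Lagrange.basisDivisor (v i) (v l)) *
        ((X - C (v j)) * Lagrange.basis s v j) := by
        rw [h1, Lagrange.basisDivisor]; ring
    _ = _ := by rw [X_sub_mul_basis s v j hj]; ring


variable {D : Finset (Fin n → ℤ)} {hstar : Fin n → ℤ}

lemma theta_prod :
    Polynomial.aeval (single hstar (1:RatFunc ℚ) : L n)
      (∏ j ∈ D, (X - C (alf hstar j))) = Fg D hstar := by
  rw [map_prod, Fg_eq]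
  refine Finset.prod_congr rfl fun j _ => ?_
  rw [map_sub, aeval_X, aeval_C, algebraMap_eq_single]
  rfl

lemma M1 (i : Fin n → ℤ) (hi : i ∈ D) :
    (single hstar (1:RatFunc ℚ) - single 0 (alf hstar i)) * eL D hstar i ∈ Idl D := by
  classical
  have key : (single hstar (1:RatFunc ℚ) - single 0 (alf hstar i)) * eL D hstar i =
      Polynomial.aeval (single hstar (1:RatFunc ℚ) : L n)
        ((X - C (alf hstar i)) * Lagrange.basis D (alf hstar) i) := by
    rw [map_mul, map_sub, aeval_X, aeval_C, algebraMap_eq_single]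
    rfl
  rw [key, X_sub_mul_basis D (alf hstar) i hi, map_mul, theta_prod]
  exact Ideal.mul_mem_left _ _ (Fg_mem D hstar)

lemma M2 (i j : Fin n → ℤ) (hi : i ∈ D) (hj : j ∈ D) (hij : i ≠ j) :
    eL D hstar i * eL D hstar j ∈ Idl D := by
  classical
  obtain ⟨q, hq⟩ := basis_mul_basis D (alf hstar) i j hi hj hij
  have : eL D hstar i * eL D hstar j =
      Polynomial.aeval (single hstar (1:RatFunc ℚ) : L n) q * Fg D hstar := by
    rw [eL, eL, ← map_mul, hq, map_mul, theta_prod]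
  rw [this]
  exact Ideal.mul_mem_left _ _ (Fg_mem D hstar)

lemma M3 (hinj : Set.InjOn (alf hstar) D) (hne : D.Nonempty) :
    ∑ i ∈ D, eL D hstar i = 1 := by
  unfold eL
  rw [← map_sum, Lagrange.sum_basis hinj hne, map_one]

variable {Q : Type} [CommRing Q] [Algebra (RatFunc ℚ) Q]

lemma bezout {n : ℕ} (D : Finset (Fin n → ℤ)) (hstar h' i : Fin n → ℤ) (hi : i ∈ D)
    (hsep : ∀ lam ∈ D, ∀ mu ∈ D, lam ≠ mu → dot hstar lam ≠ dot hstar mu) :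
    ∃ (N : ℕ) (a b : Polynomial (RatFunc ℚ)),
      Polynomial.X - Polynomial.C ((RatFunc.X : RatFunc ℚ) ^ dot h' i) =
        a * (∏ ν ∈ D, (Polynomial.X - Polynomial.C ((RatFunc.X : RatFunc ℚ) ^
            (dot h' ν + (((0:ℕ)):ℤ) * (dot hstar ν - dot hstar i))))) +
        b * (∏ ν ∈ D, (Polynomial.X - Polynomial.C ((RatFunc.X : RatFunc ℚ) ^
            (dot h' ν + ((N:ℕ):ℤ) * (dot hstar ν - dot hstar i))))) := by
  classical
  set N2 : ℕ := 1 + ((D ×ˢ D).sup fun p => (dot h' p.1 - dot h' p.2).natAbs) with hN2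
  refine ⟨N2, ?_⟩
  have hPQ : ∀ N : ℕ,
      (∏ ν ∈ D, (Polynomial.X - Polynomial.C ((RatFunc.X : RatFunc ℚ) ^
          (dot h' ν + ((N:ℕ):ℤ) * (dot hstar ν - dot hstar i)))))
      = (Polynomial.X - Polynomial.C ((RatFunc.X : RatFunc ℚ) ^ dot h' i)) *
        (∏ ν ∈ D.erase i, (Polynomial.X - Polynomial.C ((RatFunc.X : RatFunc ℚ) ^
          (dot h' ν + ((N:ℕ):ℤ) * (dot hstar ν - dot hstar i))))) := by
    intro N
    have e0 : dot h' i + ((N:ℕ):ℤ) * (dot hstar i - dot hstar i) = dot h' i := by ring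
    rw [← Finset.mul_prod_erase D _ hi, e0]
  have hcop : IsCoprime
      (∏ ν ∈ D.erase i, (Polynomial.X - Polynomial.C ((RatFunc.X : RatFunc ℚ) ^
          (dot h' ν + (((0:ℕ)):ℤ) * (dot hstar ν - dot hstar i)))))
      (∏ ν ∈ D.erase i, (Polynomial.X - Polynomial.C ((RatFunc.X : RatFunc ℚ) ^
          (dot h' ν + ((N2:ℕ):ℤ) * (dot hstar ν - dot hstar i))))) := by
    apply IsCoprime.prod_left
    intro ν hν
    apply IsCoprime.prod_right
    intro ν' hν'
    apply Polynomial.isCoprime_X_sub_C_of_isUnit_sub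
    refine (sub_ne_zero_of_ne ?_).isUnit
    intro heq
    have hexp := vpow_inj heq
    obtain ⟨hνi, hνD⟩ := Finset.mem_erase.mp hν
    obtain ⟨hν'i, hν'D⟩ := Finset.mem_erase.mp hν'
    have hk : dot hstar ν' - dot hstar i ≠ 0 := sub_ne_zero_of_ne (hsep ν' hν'D i hi hν'i)
    have hb : (dot h' ν - dot h' ν').natAbs ≤
        ((D ×ˢ D).sup fun p => (dot h' p.1 - dot h' p.2).natAbs) := by
      have hb2 := Finset.le_sup (s := D ×ˢ D)
        (f := fun p => (dot h' p.1 - dot h' p.2).natAbs)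
        (b := (ν, ν')) (Finset.mem_product.mpr ⟨hνD, hν'D⟩)
      simpa using hb2
    push_cast at hexp
    have heq2 : ((N2:ℤ)) * (dot hstar ν' - dot hstar i) = dot h' ν - dot h' ν' := by
      linarith
    have h1 := congrArg Int.natAbs heq2
    rw [Int.natAbs_mul] at h1
    have h2 : (N2:ℤ).natAbs = N2 := Int.natAbs_natCast N2
    have h3 : 1 ≤ (dot hstar ν' - dot hstar i).natAbs := Int.natAbs_pos.mpr hk
    rw [h2] at h1
    have h4 : N2 ≤ N2 * (dot hstar ν' - dot hstar i).natAbs :=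
      Nat.le_mul_of_pos_right N2 (by omega)
    rw [h1] at h4
    omega
  obtain ⟨a, b, hab⟩ := hcop
  refine ⟨a, b, ?_⟩
  rw [hPQ 0, hPQ N2]
  calc Polynomial.X - Polynomial.C ((RatFunc.X : RatFunc ℚ) ^ dot h' i)
      = (Polynomial.X - Polynomial.C ((RatFunc.X : RatFunc ℚ) ^ dot h' i)) *
        (a * (∏ ν ∈ D.erase i, (Polynomial.X - Polynomial.C ((RatFunc.X : RatFunc ℚ) ^
          (dot h' ν + (((0:ℕ)):ℤ) * (dot hstar ν - dot hstar i))))) +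
         b * (∏ ν ∈ D.erase i, (Polynomial.X - Polynomial.C ((RatFunc.X : RatFunc ℚ) ^
          (dot h' ν + ((N2:ℕ):ℤ) * (dot hstar ν - dot hstar i)))))) := by rw [hab, mul_one]
    _ = _ := by ring

lemma claimA' (hne : D.Nonempty)
    (hsep : ∀ lam ∈ D, ∀ mu ∈ D, lam ≠ mu → dot hstar lam ≠ dot hstar mu)
    (π : L n →ₐ[RatFunc ℚ] Q) (hker : ∀ z ∈ Idl D, π z = 0)
    (i : Fin n → ℤ) (hi : i ∈ D) (h' : Fin n → ℤ) :
    (π (single h' 1) - algebraMap (RatFunc ℚ) Q ((RatFunc.X : RatFunc ℚ) ^ dot h' i)) *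
      π (eL D hstar i) = 0 := by
  classical
  have hX0 : (RatFunc.X : RatFunc ℚ) ≠ 0 := RatFunc.X_ne_zero
  have hinj : Set.InjOn (alf hstar) D := by
    intro a ha b hb hab
    by_contra hne'
    exact hsep a ha b hb hne' (vpow_inj hab)
  set A : RatFunc ℚ →+* Q := algebraMap (RatFunc ℚ) Q with hA
  have hAdef : ∀ r : RatFunc ℚ, π (single 0 r) = A r := by
    intro r
    rw [← algebraMap_eq_single]
    exact π.commutes r
  set Ei : Q := π (eL D hstar i) with hEi
  set T : Q := π (single hstar 1) with hT
  set x : Q := π (single h' 1) with hx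
  -- orthogonality and idempotency
  have orth : ∀ j ∈ D, j ≠ i → Ei * π (eL D hstar j) = 0 := by
    intro j hj hji
    rw [hEi, ← map_mul]
    exact hker _ (M2 i j hi hj (fun h => hji h.symm))
  have idem : Ei * Ei = Ei := by
    have h2 : ∑ j ∈ D, Ei * π (eL D hstar j) = Ei * π (eL D hstar i) :=
      Finset.sum_eq_single_of_mem i hi fun j hj hji => orth j hj hji
    have h1 : Ei * (∑ j ∈ D, π (eL D hstar j)) = Ei := by
      rw [← map_sum, M3 hinj hne, map_one, mul_one]
    rw [Finset.mul_sum, h2, ← hEi] at h1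
    exact h1
  have EiPow : ∀ m : ℕ, Ei ^ (m + 1) = Ei := by
    intro m
    induction m with
    | zero => rw [pow_one]
    | succ k ih => rw [pow_succ, ih, idem]
  -- T acts on Ei as alf hstar i
  have TEi : T * Ei = A (alf hstar i) * Ei := by
    have h1 : π ((single hstar (1:RatFunc ℚ) - single 0 (alf hstar i)) * eL D hstar i) = 0 :=
      hker _ (M1 i hi)
    rw [map_mul, map_sub, hAdef, sub_mul, sub_eq_zero] at h1
    exact h1
  have TNEi : ∀ N : ℕ, T ^ N * Ei = A (alf hstar i ^ N) * Ei := by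
    intro N
    induction N with
    | zero => simp
    | succ k ih =>
      rw [pow_succ, pow_succ, map_mul, mul_assoc, TEi, ← mul_assoc, mul_comm (T ^ k), mul_assoc,
        ih, ← mul_assoc, mul_comm (A (alf hstar i)), mul_assoc]
  -- the main relations
  have RN : ∀ N : ℕ,
      (∏ ν ∈ D, (x - A ((RatFunc.X : RatFunc ℚ) ^
        (dot h' ν + (N:ℤ) * (dot hstar ν - dot hstar i))))) * Ei = 0 := by
    intro N
    set g : Fin n → ℤ := h' + (N : ℕ) • hstar with hg
    have hdotg : ∀ ν, dot g ν = dot h' ν + (N:ℤ) * dot hstar ν := by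
      intro ν
      rw [hg, dot_add_left]
      congr 1
      rw [dot, dot, Finset.mul_sum]
      refine Finset.sum_congr rfl fun a _ => ?_
      rw [Pi.smul_apply, nsmul_eq_mul]
      ring
    have hFg0 : π (Fg D g) = 0 := hker _ (Fg_mem D g)
    have hsingle : π (single g (1:RatFunc ℚ)) = x * T ^ N := by
      rw [hx, hT, ← map_pow, ← map_mul, AddMonoidAlgebra.single_pow,
        AddMonoidAlgebra.single_mul_single, one_pow, mul_one, hg]
    have hFgexp : π (Fg D g) = ∏ ν ∈ D, (x * T ^ N - A ((RatFunc.X : RatFunc ℚ) ^ dot g ν)) := by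
      rw [Fg_eq, map_prod]
      refine Finset.prod_congr rfl fun ν _ => ?_
      rw [map_sub, hsingle, hAdef]
    set u : Q := A ((RatFunc.X : RatFunc ℚ) ^ ((N:ℤ) * dot hstar i)) with hu
    have factor : ∀ ν ∈ D, (x * T ^ N - A ((RatFunc.X : RatFunc ℚ) ^ dot g ν)) * Ei =
        u * ((x - A ((RatFunc.X : RatFunc ℚ) ^
          (dot h' ν + (N:ℤ) * (dot hstar ν - dot hstar i)))) * Ei) := by
      intro ν _
      have hαN : alf hstar i ^ N = (RatFunc.X : RatFunc ℚ) ^ ((N:ℤ) * dot hstar i) := by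
        rw [alf, ← zpow_natCast ((RatFunc.X : RatFunc ℚ) ^ dot hstar i) N, ← zpow_mul]
        ring_nf
      have expo : (N:ℤ) * dot hstar i + (dot h' ν + (N:ℤ) * (dot hstar ν - dot hstar i)) =
          dot g ν := by rw [hdotg]; ring
      calc (x * T ^ N - A ((RatFunc.X : RatFunc ℚ) ^ dot g ν)) * Ei
          = x * (T ^ N * Ei) - A ((RatFunc.X : RatFunc ℚ) ^ dot g ν) * Ei := by ring
        _ = x * (A (alf hstar i ^ N) * Ei) - A ((RatFunc.X : RatFunc ℚ) ^ dot g ν) * Ei := by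
            rw [TNEi]
        _ = u * ((x - A ((RatFunc.X : RatFunc ℚ) ^
              (dot h' ν + (N:ℤ) * (dot hstar ν - dot hstar i)))) * Ei) := by
            rw [hαN, hu, ← expo, zpow_add₀ hX0, map_mul]
            ring
    have hprod : (0 : Q) = u ^ D.card *
        ((∏ ν ∈ D, (x - A ((RatFunc.X : RatFunc ℚ) ^
          (dot h' ν + (N:ℤ) * (dot hstar ν - dot hstar i))))) * Ei ^ D.card) := by
      calc (0 : Q) = π (Fg D g) * Ei ^ D.card := by rw [hFg0, zero_mul]
        _ = ∏ ν ∈ D, ((x * T ^ N - A ((RatFunc.X : RatFunc ℚ) ^ dot g ν)) * Ei) := by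
            rw [hFgexp, Finset.prod_mul_distrib, Finset.prod_const]
        _ = ∏ ν ∈ D, (u * ((x - A ((RatFunc.X : RatFunc ℚ) ^
              (dot h' ν + (N:ℤ) * (dot hstar ν - dot hstar i)))) * Ei)) :=
            Finset.prod_congr rfl factor
        _ = u ^ D.card * ((∏ ν ∈ D, (x - A ((RatFunc.X : RatFunc ℚ) ^
              (dot h' ν + (N:ℤ) * (dot hstar ν - dot hstar i))))) * Ei ^ D.card) := by
            rw [Finset.prod_mul_distrib, Finset.prod_const, Finset.prod_mul_distrib,
              Finset.prod_const]
    obtain ⟨m, hm⟩ : ∃ m, D.card = m + 1 :=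
      ⟨D.card - 1, by have := Finset.card_pos.mpr hne; omega⟩
    have hEc : Ei ^ D.card = Ei := by rw [hm, EiPow]
    have huunit : IsUnit u := (zpow_ne_zero _ hX0).isUnit.map A
    rw [hEc] at hprod
    exact (huunit.pow D.card).mul_right_eq_zero.mp hprod.symm
  -- finish via bezout
  obtain ⟨N, a, b, hab⟩ := bezout D hstar h' i hi hsep
  have haP : ∀ M : ℕ, (Polynomial.aeval x (∏ ν ∈ D, (Polynomial.X -
      Polynomial.C ((RatFunc.X : RatFunc ℚ) ^
        (dot h' ν + ((M:ℕ):ℤ) * (dot hstar ν - dot hstar i)))))) * Ei = 0 := by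
    intro M
    have hev : Polynomial.aeval x (∏ ν ∈ D, (Polynomial.X -
        Polynomial.C ((RatFunc.X : RatFunc ℚ) ^
          (dot h' ν + ((M:ℕ):ℤ) * (dot hstar ν - dot hstar i)))))
        = ∏ ν ∈ D, (x - A ((RatFunc.X : RatFunc ℚ) ^
          (dot h' ν + (M:ℤ) * (dot hstar ν - dot hstar i)))) := by
      rw [map_prod]
      refine Finset.prod_congr rfl fun ν _ => ?_
      rw [map_sub, Polynomial.aeval_X, Polynomial.aeval_C, hA]
    rw [hev]
    exact RN M
  have final := congrArg (Polynomial.aeval x) hab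
  rw [map_sub, map_add, map_mul, map_mul, Polynomial.aeval_X, Polynomial.aeval_C] at final
  have hgoal : (x - algebraMap (RatFunc ℚ) Q ((RatFunc.X : RatFunc ℚ) ^ dot h' i)) * Ei = 0 := by
    rw [final, add_mul, mul_assoc, mul_assoc, haP 0, haP N, mul_zero, mul_zero, add_zero]
  rw [← hA] at hgoal
  exact hgoal

lemma prod_pow_eq (lam h : Fin n → ℤ) :
    (∏ a, ((RatFunc.X : RatFunc ℚ) ^ (lam a : ℤ)) ^ (h a : ℤ))
      = (RatFunc.X : RatFunc ℚ) ^ dot h lam := by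
  rw [dot]
  have hcongr : ∀ a ∈ Finset.univ, ((RatFunc.X : RatFunc ℚ) ^ (lam a : ℤ)) ^ (h a : ℤ)
      = (RatFunc.X : RatFunc ℚ) ^ (h a * lam a) := by
    intro a _
    rw [← zpow_mul, mul_comm]
  rw [Finset.prod_congr rfl hcongr, prod_zpow₀ _ RatFunc.X_ne_zero]

lemma phi_eq_sum (lam : Fin n → ℤ) (f : L n) :
    phi lam f = Finsupp.sum f.coeff fun h c =>
      c * ∏ a, ((RatFunc.X : RatFunc ℚ) ^ (lam a : ℤ)) ^ (h a : ℤ) := by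
  rw [phi, AddMonoidAlgebra.lift_apply]
  refine Finsupp.sum_congr fun h _ => ?_
  rw [prod_pow_eq, smul_eq_mul]
  rfl

lemma phi_eq_support_sum (lam : Fin n → ℤ) (f : L n) :
    phi lam f = ∑ h ∈ f.coeff.support, f.coeff h * (RatFunc.X : RatFunc ℚ) ^ dot h lam := by
  rw [phi, AddMonoidAlgebra.lift_apply, Finsupp.sum]
  refine Finset.sum_congr rfl fun h _ => ?_
  rw [smul_eq_mul]
  rfl

lemma dot_zero_left (lam : Fin n → ℤ) : dot (0 : Fin n → ℤ) lam = 0 := by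
  simp [dot]

lemma easy (D : Finset (Fin n → ℤ)) (f : L n) (hf : f ∈ Idl D)
    (lam : Fin n → ℤ) (hlam : lam ∈ D) : phi lam f = 0 := by
  have hle : Idl D ≤ RingHom.ker ((phi lam : L n →ₐ[RatFunc ℚ] RatFunc ℚ) : L n →+* RatFunc ℚ) := by
    rw [Idl, Ideal.span_le]
    rintro z ⟨h, rfl⟩
    rw [SetLike.mem_coe, RingHom.mem_ker]
    show phi lam (Fg D h) = 0
    rw [Fg_eq, map_prod]
    refine Finset.prod_eq_zero hlam ?_
    rw [map_sub, phi_single, phi_single, one_mul, dot_zero_left, zpow_zero, mul_one, sub_self]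
  exact hle hf

lemma hard (D : Finset (Fin n → ℤ)) (f : L n) (hf : ∀ lam ∈ D, phi lam f = 0) :
    f ∈ Idl D := by
  classical
  rcases D.eq_empty_or_nonempty with rfl | hne
  · have h1 : (1 : L n) ∈ Idl (∅ : Finset (Fin n → ℤ)) :=
      Ideal.subset_span ⟨0, by rw [Fg_eq, Finset.prod_empty]⟩
    have htop : Idl (∅ : Finset (Fin n → ℤ)) = ⊤ := (Ideal.eq_top_iff_one _).mpr h1
    rw [htop]
    trivial
  · -- separating functional
    have hSne : ∀ d ∈ ((D ×ˢ D).filter fun p => p.1 ≠ p.2).image fun p => p.1 - p.2,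
        d ≠ (0 : Fin n → ℤ) := by
      intro d hd
      obtain ⟨p, hp, rfl⟩ := Finset.mem_image.mp hd
      exact sub_ne_zero_of_ne (Finset.mem_filter.mp hp).2
    obtain ⟨hstar, hsep'⟩ := exists_sep _ hSne
    have hsep : ∀ lam ∈ D, ∀ mu ∈ D, lam ≠ mu → dot hstar lam ≠ dot hstar mu := by
      intro lam hl mu hm hne' heq
      have hmem : lam - mu ∈ ((D ×ˢ D).filter fun p => p.1 ≠ p.2).image fun p => p.1 - p.2 :=
        Finset.mem_image.mpr ⟨(lam, mu),
          Finset.mem_filter.mpr ⟨Finset.mem_product.mpr ⟨hl, hm⟩, hne'⟩, rfl⟩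
      apply hsep' _ hmem
      have hexp : (∑ a, hstar a * (lam - mu) a) = dot hstar lam - dot hstar mu := by
        rw [dot, dot, ← Finset.sum_sub_distrib]
        refine Finset.sum_congr rfl fun a _ => ?_
        rw [Pi.sub_apply]
        ring
      rw [hexp, heq, sub_self]
    have hinj : Set.InjOn (alf hstar) D := by
      intro a ha b hb hab
      by_contra hne'
      exact hsep a ha b hb hne' (vpow_inj hab)
    -- quotient
    set π : L n →ₐ[RatFunc ℚ] (L n ⧸ Idl D) := Ideal.Quotient.mkₐ (RatFunc ℚ) (Idl D) with hπ
    have hker : ∀ z ∈ Idl D, π z = 0 := fun z hz => Ideal.Quotient.eq_zero_iff_mem.mpr hz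
    suffices hfz : π f = 0 by exact Ideal.Quotient.eq_zero_iff_mem.mp hfz
    have hsum1 : ∑ j ∈ D, π (eL D hstar j) = 1 := by
      rw [← map_sum, M3 hinj hne, map_one]
    have hdecomp : π f = ∑ j ∈ D, π f * π (eL D hstar j) := by
      rw [← Finset.mul_sum, hsum1, mul_one]
    rw [hdecomp]
    refine Finset.sum_eq_zero fun j hj => ?_
    -- decompose f into singles
    have hfdec : f = ∑ h ∈ f.coeff.support, single h (f.coeff h) := by
      conv_lhs => rw [← AddMonoidAlgebra.sum_coeff_single f]
      rfl
    have hterm : ∀ h : Fin n → ℤ, π (single h (f.coeff h)) * π (eL D hstar j)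
        = algebraMap (RatFunc ℚ) (L n ⧸ Idl D) (f.coeff h * (RatFunc.X : RatFunc ℚ) ^ dot h j) *
            π (eL D hstar j) := by
      intro h
      have hs : single h (f.coeff h) = single 0 (f.coeff h) * single h (1 : RatFunc ℚ) := by
        rw [AddMonoidAlgebra.single_mul_single, zero_add, mul_one]
      have hca := claimA' hne hsep π hker j hj h
      have hmove : π (single h 1) * π (eL D hstar j)
          = algebraMap (RatFunc ℚ) (L n ⧸ Idl D) ((RatFunc.X : RatFunc ℚ) ^ dot h j) *
              π (eL D hstar j) := by
        have h2 := hca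
        rw [sub_mul] at h2
        exact sub_eq_zero.mp h2
      rw [hs, map_mul, ← algebraMap_eq_single, AlgHom.commutes, map_mul, mul_assoc, hmove]
      ring
    calc π f * π (eL D hstar j)
        = (∑ h ∈ f.coeff.support, π (single h (f.coeff h))) * π (eL D hstar j) := by
          rw [← map_sum, ← hfdec]
      _ = ∑ h ∈ f.coeff.support, π (single h (f.coeff h)) * π (eL D hstar j) := by
          rw [Finset.sum_mul]
      _ = ∑ h ∈ f.coeff.support, algebraMap (RatFunc ℚ) (L n ⧸ Idl D)
            (f.coeff h * (RatFunc.X : RatFunc ℚ) ^ dot h j) * π (eL D hstar j) :=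
          Finset.sum_congr rfl fun h _ => hterm h
      _ = algebraMap (RatFunc ℚ) (L n ⧸ Idl D) (phi j f) * π (eL D hstar j) := by
          rw [← Finset.sum_mul, ← map_sum, ← phi_eq_support_sum]
      _ = 0 := by rw [hf j hj, map_zero, zero_mul]



end Stmt3Aux

theorem stmt3 (n : ℕ) (hn : 1 ≤ n) (D : Finset (Fin n → ℤ))
    (f : AddMonoidAlgebra (RatFunc ℚ) (Fin n → ℤ)) :
    (∀ lam ∈ D,
      (Finsupp.sum f.coeff fun h c =>
        c * ∏ a, ((RatFunc.X : RatFunc ℚ) ^ (lam a : ℤ)) ^ (h a : ℤ)) = 0) ↔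
      f ∈ Ideal.span (Set.range fun h : Fin n → ℤ =>
        ∏ lam ∈ D,
          (AddMonoidAlgebra.single h (1 : RatFunc ℚ) -
            AddMonoidAlgebra.single 0
              ((RatFunc.X : RatFunc ℚ) ^ (∑ a, h a * lam a : ℤ)))) := by
  constructor
  · intro H
    exact Stmt3Aux.hard D f fun lam hlam => by
      rw [Stmt3Aux.phi_eq_sum]; exact H lam hlam
  · intro hf lam hlam
    rw [← Stmt3Aux.phi_eq_sum]
    exact Stmt3Aux.easy D f hf lam hlam
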